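/- Let g : [0, ∞) → ℝ be continuous, ℓ > 0, and L : ℝ² → ℝ² a symmetric linear map. Then ∫_{|z|≤ℓ} g(|z|) ⟨z, L z⟩² dz = (π/4)(∫₀^ℓ g(r) r⁵ dr)(2 tr(L²) + (tr L)²). -/

import Mathlib

open scoped RealInnerProductSpace
open MeasureTheory

lemma angular (a b c : ℝ) :
    ∫ θ in (-Real.pi)..Real.pi,
      (a * Real.cos θ ^ 2 + 2*b*Real.sin θ*Real.cos θ + c * Real.sin θ ^ 2) ^ 2
      = Real.pi / 4 * (3*a^2 + 2*a*c + 3*c^2 + 4*b^2) := by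
  set A : ℝ := (3*a^2 + 3*c^2 + 2*a*c + 4*b^2)/8 with hA
  set B : ℝ := a^2 - A with hB
  set D : ℝ := 2*A - a^2 - c^2 with hD
  set H : ℝ → ℝ := fun θ => A*θ + B*(Real.sin θ*Real.cos θ) + D*(Real.sin θ^3*Real.cos θ)
      - (a*b)*Real.cos θ^4 + (b*c)*Real.sin θ^4 with hH
  have hderiv : ∀ θ ∈ Set.uIcc (-Real.pi) Real.pi, HasDerivAt H
      ((a * Real.cos θ ^ 2 + 2*b*Real.sin θ*Real.cos θ + c * Real.sin θ ^ 2) ^ 2) θ := by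
    intro θ _
    have h1 : HasDerivAt (fun θ : ℝ => A*θ) A θ := by simpa using (hasDerivAt_id θ).const_mul A
    have hs := Real.hasDerivAt_sin θ
    have hc := Real.hasDerivAt_cos θ
    have h2 : HasDerivAt (fun θ : ℝ => B*(Real.sin θ*Real.cos θ))
        (B*(Real.cos θ*Real.cos θ + Real.sin θ*(-Real.sin θ))) θ := ((hs.mul hc)).const_mul B
    have h3 : HasDerivAt (fun θ : ℝ => D*(Real.sin θ^3*Real.cos θ))
        (D*((3*Real.sin θ^2*Real.cos θ)*Real.cos θ + Real.sin θ^3*(-Real.sin θ))) θ := by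
      have := ((hs.pow 3).mul hc).const_mul D
      simpa using this
    have h4 : HasDerivAt (fun θ : ℝ => (a*b)*Real.cos θ^4)
        ((a*b)*(4*Real.cos θ^3*(-Real.sin θ))) θ := by
      have := (hc.pow 4).const_mul (a*b)
      simpa using this
    have h5 : HasDerivAt (fun θ : ℝ => (b*c)*Real.sin θ^4)
        ((b*c)*(4*Real.sin θ^3*(Real.cos θ))) θ := by
      have := (hs.pow 4).const_mul (b*c)
      simpa using this
    have := (((h1.add h2).add h3).sub h4).add h5
    refine this.congr_deriv ?_
    symm
    have hsc := Real.sin_sq_add_cos_sq θ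
    rw [hA, hB, hD]
    linear_combination (A + (2*A - a^2) * Real.sin θ^2 + a^2 * Real.cos θ^2) * hsc
  have hint : IntervalIntegrable
      (fun θ => (a * Real.cos θ ^ 2 + 2*b*Real.sin θ*Real.cos θ + c * Real.sin θ ^ 2) ^ 2)
      MeasureTheory.volume (-Real.pi) Real.pi := by
    apply Continuous.intervalIntegrable; continuity
  rw [intervalIntegral.integral_eq_sub_of_hasDerivAt hderiv hint]
  simp only [hH, Real.sin_pi, Real.cos_pi, Real.sin_neg, Real.cos_neg]
  rw [hA]; ring


set_option maxHeartbeats 1000000 in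
theorem statement4 (g : ℝ → ℝ) (hg : ContinuousOn g (Set.Ici 0)) {ℓ : ℝ} (hℓ : 0 < ℓ)
    (L : EuclideanSpace ℝ (Fin 2) →ₗ[ℝ] EuclideanSpace ℝ (Fin 2)) (hL : L.IsSymmetric) :
    ∫ z in Metric.closedBall (0 : EuclideanSpace ℝ (Fin 2)) ℓ, g ‖z‖ * ⟪z, L z⟫ ^ 2
      = Real.pi / 4 * (∫ r in (0:ℝ)..ℓ, g r * r ^ 5) *
          (2 * LinearMap.trace ℝ _ (L ∘ₗ L) + (LinearMap.trace ℝ _ L) ^ 2) := by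
  classical
  set e0 : EuclideanSpace ℝ (Fin 2) := EuclideanSpace.single 0 1 with he0
  set e1 : EuclideanSpace ℝ (Fin 2) := EuclideanSpace.single 1 1 with he1
  set a : ℝ := L e0 0 with ha
  set b : ℝ := L e0 1 with hbdef
  set c : ℝ := L e1 1 with hc
  -- symmetry gives the off-diagonal equality
  have hb : L e1 0 = b := by
    have := hL e1 e0
    simp only [PiLp.inner_apply, RCLike.inner_apply, conj_trivial, Fin.sum_univ_two,
      he0, he1, EuclideanSpace.single_apply] at this
    simpa [hbdef] using this
  -- decomposition of a vector
  have hz : ∀ z : EuclideanSpace ℝ (Fin 2), z = z 0 • e0 + z 1 • e1 := by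
    intro z
    ext i
    fin_cases i <;>
      simp [he0, he1, EuclideanSpace.single_apply]
  have hL0 : ∀ z : EuclideanSpace ℝ (Fin 2), L z 0 = a * z 0 + b * z 1 := by
    intro z
    conv_lhs => rw [hz z, L.map_add, L.map_smul, L.map_smul]
    simp [hb, mul_comm, ← ha]
  have hL1 : ∀ z : EuclideanSpace ℝ (Fin 2), L z 1 = b * z 0 + c * z 1 := by
    intro z
    conv_lhs => rw [hz z, L.map_add, L.map_smul, L.map_smul]
    simp [mul_comm, ← hbdef, ← hc]
  have hinner : ∀ z : EuclideanSpace ℝ (Fin 2),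
      ⟪z, L z⟫ = a * (z 0)^2 + 2*b*(z 0)*(z 1) + c * (z 1)^2 := by
    intro z
    simp only [PiLp.inner_apply, RCLike.inner_apply, conj_trivial, Fin.sum_univ_two]
    rw [hL0, hL1]; ring
  -- traces
  have htrL : LinearMap.trace ℝ _ L = a + c := by
    rw [LinearMap.trace_eq_matrix_trace ℝ (EuclideanSpace.basisFun (Fin 2) ℝ).toBasis L,
      Matrix.trace]
    simp [Matrix.diag, LinearMap.toMatrix_apply, Fin.sum_univ_two,
      EuclideanSpace.basisFun_apply, he0, he1]
    rfl
  have htrL2 : LinearMap.trace ℝ _ (L ∘ₗ L) = a^2 + 2*b^2 + c^2 := by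
    have k0 : L (L e0) 0 = a*a + b*b := by rw [hL0 (L e0), ← ha, ← hbdef]
    have k1 : L (L e1) 1 = b*b + c*c := by rw [hL1 (L e1), hb, ← hc]
    rw [LinearMap.trace_eq_matrix_trace ℝ (EuclideanSpace.basisFun (Fin 2) ℝ).toBasis,
      Matrix.trace]
    simp only [Matrix.diag, LinearMap.toMatrix_apply, Fin.sum_univ_two,
      OrthonormalBasis.coe_toBasis, EuclideanSpace.basisFun_apply,
      OrthonormalBasis.coe_toBasis_repr_apply, EuclideanSpace.basisFun_repr,
      LinearMap.comp_apply]
    rw [← he0, ← he1, k0, k1]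
    ring
  -- the measurable equivalence to ℝ × ℝ
  set φ : EuclideanSpace ℝ (Fin 2) ≃ᵐ ℝ × ℝ :=
    (MeasurableEquiv.toLp 2 (Fin 2 → ℝ)).symm.trans MeasurableEquiv.finTwoArrow with hφdef
  have hφ : MeasurePreserving φ volume volume :=
    (MeasureTheory.volume_preserving_finTwoArrow ℝ).comp
      (EuclideanSpace.volume_preserving_symm_measurableEquiv_toLp (Fin 2))
  have hφapp : ∀ z : EuclideanSpace ℝ (Fin 2), φ z = (z 0, z 1) := fun z => rfl
  set G : ℝ × ℝ → ℝ := fun p =>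
    g (Real.sqrt (p.1^2 + p.2^2)) * (a * p.1^2 + 2*b*(p.1*p.2) + c*p.2^2)^2 with hG
  set s : Set (ℝ × ℝ) := {p | p.1^2 + p.2^2 ≤ ℓ^2} with hs
  have hsm : MeasurableSet s := by
    have : IsClosed s := isClosed_le (by fun_prop) continuous_const
    exact this.measurableSet
  have hpre : φ ⁻¹' s = Metric.closedBall 0 ℓ := by
    ext z
    simp only [Set.mem_preimage, hφapp, hs, Set.mem_setOf_eq, Metric.mem_closedBall,
      dist_zero_right]
    rw [EuclideanSpace.norm_eq]
    simp only [Real.norm_eq_abs, sq_abs, Fin.sum_univ_two]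
    constructor
    · intro h
      calc Real.sqrt (z 0 ^ 2 + z 1 ^ 2) ≤ Real.sqrt (ℓ^2) := Real.sqrt_le_sqrt h
        _ = ℓ := Real.sqrt_sq hℓ.le
    · intro h
      have h0 : (0:ℝ) ≤ z 0 ^ 2 + z 1 ^ 2 := by positivity
      nlinarith [Real.sq_sqrt h0, Real.sqrt_nonneg (z 0 ^ 2 + z 1 ^ 2)]
  have hFG : ∀ z : EuclideanSpace ℝ (Fin 2), g ‖z‖ * ⟪z, L z⟫ ^ 2 = G (φ z) := by
    intro z
    rw [hinner, hG, hφapp, EuclideanSpace.norm_eq]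
    simp only [Real.norm_eq_abs, sq_abs, Fin.sum_univ_two]
    ring_nf
  -- step 1 : transfer to ℝ × ℝ
  have step1 : (∫ z in Metric.closedBall (0 : EuclideanSpace ℝ (Fin 2)) ℓ,
      g ‖z‖ * ⟪z, L z⟫ ^ 2) = ∫ p in s, G p := by
    rw [← hpre]
    rw [show (fun z : EuclideanSpace ℝ (Fin 2) => g ‖z‖ * ⟪z, L z⟫ ^ 2)
        = fun z => G (φ z) from funext hFG]
    exact hφ.setIntegral_preimage_emb φ.measurableEmbedding G s
  set T : Set (ℝ × ℝ) := Set.Ioc 0 ℓ ×ˢ Set.Ioo (-Real.pi) Real.pi with hT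
  have hTm : MeasurableSet T := measurableSet_Ioc.prod measurableSet_Ioo
  have hTsub : T ⊆ polarCoord.target := fun p hp =>
    ⟨hp.1.1, hp.2⟩
  set F : ℝ × ℝ → ℝ := fun p =>
    (g p.1 * p.1^5) * (a * Real.cos p.2 ^ 2 + 2*b*Real.sin p.2*Real.cos p.2
      + c * Real.sin p.2 ^ 2)^2 with hF
  have key : ∀ p ∈ polarCoord.target,
      p.1 • (s.indicator G) (polarCoord.symm p) = T.indicator F p := by
    intro p hp
    have hr : 0 < p.1 := hp.1
    have hθ : p.2 ∈ Set.Ioo (-Real.pi) Real.pi := hp.2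
    have hsymm : polarCoord.symm p = (p.1 * Real.cos p.2, p.1 * Real.sin p.2) := rfl
    have hnorm : (p.1 * Real.cos p.2)^2 + (p.1 * Real.sin p.2)^2 = p.1^2 := by
      have := Real.sin_sq_add_cos_sq p.2
      nlinarith [this]
    have hmem : polarCoord.symm p ∈ s ↔ p ∈ T := by
      rw [hsymm, hs]
      simp only [Set.mem_setOf_eq, hT, Set.mem_prod, Set.mem_Ioc, Set.mem_Ioo]
      rw [hnorm]
      constructor
      · intro h
        refine ⟨⟨hr, ?_⟩, hθ⟩
        nlinarith
      · intro h
        nlinarith [h.1.2]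
    by_cases hmem2 : p ∈ T
    · rw [Set.indicator_of_mem (hmem.mpr hmem2), Set.indicator_of_mem hmem2]
      rw [hsymm, hG, hF]
      simp only
      rw [hnorm, Real.sqrt_sq hr.le, smul_eq_mul]
      ring
    · rw [Set.indicator_of_notMem (fun h => hmem2 (hmem.mp h)),
        Set.indicator_of_notMem hmem2]
      simp
  have step2 : (∫ p in s, G p) = ∫ p in T, F p := by
    rw [← integral_indicator hsm, ← integral_comp_polarCoord_symm (s.indicator G)]
    rw [setIntegral_congr_fun polarCoord.open_target.measurableSet key]
    rw [setIntegral_indicator hTm]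
    congr 1
    rw [Set.inter_eq_right.mpr hTsub]
  -- step 3 : Fubini
  have step3 : (∫ p in T, F p) = (∫ r in Set.Ioc (0:ℝ) ℓ, g r * r^5) *
      ∫ θ in Set.Ioo (-Real.pi) Real.pi,
        (a * Real.cos θ ^ 2 + 2*b*Real.sin θ*Real.cos θ + c * Real.sin θ ^ 2)^2 := by
    rw [hT, hF, Measure.volume_eq_prod, ← Measure.prod_restrict]
    exact integral_prod_mul (fun r => g r * r^5)
      (fun θ => (a * Real.cos θ ^ 2 + 2*b*Real.sin θ*Real.cos θ + c * Real.sin θ ^ 2)^2)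
  rw [step1, step2, step3]
  have hrad : (∫ r in Set.Ioc (0:ℝ) ℓ, g r * r^5) = ∫ r in (0:ℝ)..ℓ, g r * r ^ 5 := by
    rw [intervalIntegral.integral_of_le hℓ.le]
  have hang : (∫ θ in Set.Ioo (-Real.pi) Real.pi,
      (a * Real.cos θ ^ 2 + 2*b*Real.sin θ*Real.cos θ + c * Real.sin θ ^ 2)^2)
      = Real.pi / 4 * (3*a^2 + 2*a*c + 3*c^2 + 4*b^2) := by
    rw [← integral_Ioc_eq_integral_Ioo, ← intervalIntegral.integral_of_le
      (by linarith [Real.pi_pos] : -Real.pi ≤ Real.pi)]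
    exact angular a b c
  rw [hrad, hang, htrL, htrL2]
  ring
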